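/- If a continuous map f : I → I of a compact interval has a periodic point of least period 2^i · m with m ≥ 3 odd and i ≥ 0, then f has a periodic point of least period 2^{ℓ+1} for every ℓ ≥ i. -/

import Mathlib

open Set

/-- `x` has least period `m` under `f`. -/
def IsLeastPeriod (f : ℝ → ℝ) (x : ℝ) (m : ℕ) : Prop :=
  0 < m ∧ f^[m] x = x ∧ ∀ k, 0 < k → k < m → f^[k] x ≠ x

namespace SharkovskiiAux

/-- The set of points in `[l,r]` where a continuous function takes value `v` is compact. -/
lemma isCompact_eqset {l r v : ℝ} {φ : ℝ → ℝ} (hφ : ContinuousOn φ (Icc l r)) :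
    IsCompact {t | t ∈ Icc l r ∧ φ t = v} := by
  have hclosed : IsClosed {t | t ∈ Icc l r ∧ φ t = v} := by
    have he : {t | t ∈ Icc l r ∧ φ t = v} = Icc l r ∩ φ ⁻¹' {v} := rfl
    rw [he]
    exact hφ.preimage_isClosed_of_isClosed isClosed_Icc isClosed_singleton
  exact isCompact_Icc.of_isClosed_subset hclosed (fun t ht => ht.1)

/-- The set of points in `[l,r]` where `0 ≤ φ` is compact, for `φ` continuous on `[l,r]`. -/
lemma isCompact_sep {l r : ℝ} {φ : ℝ → ℝ} (hφ : ContinuousOn φ (Icc l r)) :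
    IsCompact {t | t ∈ Icc l r ∧ 0 ≤ φ t} := by
  have hclosed : IsClosed {t | t ∈ Icc l r ∧ 0 ≤ φ t} := by
    have he : {t | t ∈ Icc l r ∧ 0 ≤ φ t} = Icc l r ∩ φ ⁻¹' (Ici 0) := rfl
    rw [he]
    exact hφ.preimage_isClosed_of_isClosed isClosed_Icc isClosed_Ici
  exact isCompact_Icc.of_isClosed_subset hclosed (fun t ht => ht.1)

/-- First point where a continuous function reaches a value `v` from below. -/
lemma exists_first_eq {l r v : ℝ} {φ : ℝ → ℝ} (hlr : l ≤ r) (hφ : ContinuousOn φ (Icc l r))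
    (h1 : φ l ≤ v) (h2 : v ≤ φ r) :
    ∃ c ∈ Icc l r, φ c = v ∧ ∀ t ∈ Ico l c, φ t < v := by
  have hne : {t | t ∈ Icc l r ∧ φ t = v}.Nonempty := by
    obtain ⟨c, hc, hceq⟩ := intermediate_value_Icc hlr hφ ⟨h1, h2⟩
    exact ⟨c, hc, hceq⟩
  obtain ⟨c, ⟨hcmem, hceq⟩, hleast⟩ := (isCompact_eqset hφ).exists_isLeast hne
  refine ⟨c, hcmem, hceq, ?_⟩
  intro t ht
  by_contra hge
  push_neg at hge
  have htr : t ≤ r := le_trans ht.2.le hcmem.2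
  obtain ⟨w, hw, hweq⟩ := intermediate_value_Icc ht.1 (hφ.mono (Icc_subset_Icc le_rfl htr))
    ⟨h1, hge⟩
  have hcw : c ≤ w := hleast ⟨⟨hw.1, le_trans hw.2 htr⟩, hweq⟩
  exact absurd ht.2 (not_lt.2 (le_trans hcw hw.2))

/-- Last point where a continuous function takes a value `v`, decreasing case. -/
lemma exists_last_eq {l r v : ℝ} {φ : ℝ → ℝ} (hlr : l ≤ r) (hφ : ContinuousOn φ (Icc l r))
    (h1 : v ≤ φ l) (h2 : φ r ≤ v) :
    ∃ c ∈ Icc l r, φ c = v ∧ ∀ t ∈ Ioc c r, φ t < v := by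
  have hmap : MapsTo (fun t => l + r - t) (Icc l r) (Icc l r) := by
    intro t ht
    simp only [Set.mem_Icc] at ht ⊢
    constructor
    · linarith [ht.2]
    · linarith [ht.1]
  have hψ : ContinuousOn (fun t => φ (l + r - t)) (Icc l r) :=
    hφ.comp ((continuousOn_const).sub continuousOn_id) hmap
  obtain ⟨c, hcmem, hceq, hbef⟩ := exists_first_eq hlr hψ
    (show φ (l + r - l) ≤ v by rw [show l + r - l = r by ring]; exact h2)
    (show v ≤ φ (l + r - r) by rw [show l + r - r = l by ring]; exact h1)
  refine ⟨l + r - c, ⟨by linarith [hcmem.2], by linarith [hcmem.1]⟩, hceq, ?_⟩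
  intro t ht
  have hmem : l + r - t ∈ Ico l c := ⟨by linarith [ht.2], by linarith [ht.1]⟩
  have hb := hbef _ hmem
  have he : l + r - (l + r - t) = t := by ring
  rwa [he] at hb

/-- Last point where a continuous function takes a value `v`, increasing case. -/
lemma exists_last_eq' {l r v : ℝ} {φ : ℝ → ℝ} (hlr : l ≤ r) (hφ : ContinuousOn φ (Icc l r))
    (h1 : φ l ≤ v) (h2 : v ≤ φ r) :
    ∃ c ∈ Icc l r, φ c = v ∧ ∀ t ∈ Ioc c r, v < φ t := by
  obtain ⟨c, hcmem, hceq, haft⟩ := exists_last_eq (v := -v) hlr hφ.neg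
    (by simpa using h1) (by simpa using h2)
  refine ⟨c, hcmem, by linarith [neg_inj.1 (show -φ c = -v from hceq)], ?_⟩
  intro t ht
  have := haft t ht
  change -φ t < -v at this
  linarith

/-- Limit comparison within a set. -/
lemma le_of_within {φ ψ : ℝ → ℝ} {s : Set ℝ} {c : ℝ} (hne : (nhdsWithin c s).NeBot)
    (hφ : ContinuousWithinAt φ s c) (hψ : ContinuousWithinAt ψ s c)
    (h : ∀ t ∈ s, φ t ≤ ψ t) : φ c ≤ ψ c :=
  le_of_tendsto_of_tendsto hφ hψ (eventually_mem_nhdsWithin.mono h)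

section Main

variable {a b : ℝ} {f : ℝ → ℝ}

lemma contOn_iterate (hf : ContinuousOn f (Icc a b)) (hmaps : MapsTo f (Icc a b) (Icc a b)) :
    ∀ k : ℕ, ContinuousOn f^[k] (Icc a b) := by
  intro k
  induction k with
  | zero => simpa using continuousOn_id
  | succ k ih =>
      rw [Function.iterate_succ]
      exact ih.comp hf hmaps

/-- Key lemma: if `f` has no genuine period two point, then we cannot have
`f (f x) ≤ x < f x`. -/
lemma coherence (hab : a ≤ b) (hf : ContinuousOn f (Icc a b))
    (hmaps : MapsTo f (Icc a b) (Icc a b))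
    (NP2 : ∀ z ∈ Icc a b, f (f z) = z → f z = z)
    {x : ℝ} (hx : x ∈ Icc a b) (h1 : x < f x) (h2 : f (f x) ≤ x) : False := by
  have hf2 : ContinuousOn (fun t => f (f t)) (Icc a b) := hf.comp hf hmaps
  have hfb : f b ≤ b := (hmaps ⟨hab, le_rfl⟩).2
  have h2s : f (f x) < x := by
    rcases h2.lt_or_eq with h | h
    · exact h
    · exact absurd (NP2 x hx h) h1.ne'
  -- least point of [x,b] with t ≤ f (f t)
  set S₀ : Set ℝ := {t | t ∈ Icc x b ∧ 0 ≤ f (f t) - t} with hS₀def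
  have hxb : x ≤ b := hx.2
  have hS₀compact : IsCompact S₀ :=
    isCompact_sep ((hf2.mono (Icc_subset_Icc hx.1 le_rfl)).sub continuousOn_id)
  have hS₀ne : S₀.Nonempty := by
    obtain ⟨c₀, hc₀, hc₀eq⟩ := intermediate_value_Icc hxb
      ((continuousOn_id.sub (hf.mono (Icc_subset_Icc hx.1 le_rfl))))
      (show (0:ℝ) ∈ Icc (x - f x) (b - f b) from ⟨by linarith, by linarith⟩)
    have hfix : f c₀ = c₀ := by
      simp only [Pi.sub_apply, id] at hc₀eq
      linarith
    exact ⟨c₀, hc₀, by rw [hfix, hfix]; linarith⟩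
  obtain ⟨c, ⟨hcmem, hcge⟩, hcleast⟩ := hS₀compact.exists_isLeast hS₀ne
  have hcab : c ∈ Icc a b := ⟨le_trans hx.1 hcmem.1, hcmem.2⟩
  have hxc : x < c := by
    rcases hcmem.1.lt_or_eq with h | h
    · exact h
    · exfalso; rw [← h] at hcge; linarith
  have hlt : ∀ t ∈ Ico x c, f (f t) < t := by
    intro t ht
    by_contra hge
    push_neg at hge
    exact absurd (hcleast ⟨⟨ht.1, le_trans ht.2.le hcmem.2⟩, by linarith⟩) (not_le.2 ht.2)
  -- f (f c) = c and f c = c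
  have hIco_sub : Ico x c ⊆ Icc a b := fun t ht =>
    ⟨le_trans hx.1 ht.1, le_trans ht.2.le hcmem.2⟩
  have hneIco : (nhdsWithin c (Ico x c)).NeBot := by
    rw [← mem_closure_iff_nhdsWithin_neBot, closure_Ico hxc.ne]
    exact ⟨hxc.le, le_rfl⟩
  have hffc_le : f (f c) ≤ c := by
    refine le_of_within hneIco (((hf2.continuousWithinAt hcab)).mono hIco_sub)
      continuousWithinAt_id (fun t ht => (hlt t ht).le)
  have hffc : f (f c) = c := le_antisymm hffc_le (by linarith)
  have hfc : f c = c := NP2 c hcab hffc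
  -- f t > t on [x, c)
  have hfgt : ∀ t ∈ Ico x c, t < f t := by
    intro t ht
    by_contra hle
    push_neg at hle
    obtain ⟨e, he, heeq⟩ := intermediate_value_Icc ht.1
      ((continuousOn_id.sub (hf.mono (fun w hw => hIco_sub ⟨hw.1, lt_of_le_of_lt hw.2 ht.2⟩))))
      (show (0:ℝ) ∈ Icc (x - f x) (t - f t) from ⟨by linarith, by linarith⟩)
    have hfe : f e = e := by
      simp only [Pi.sub_apply, id] at heeq
      linarith
    have := hlt e ⟨he.1, lt_of_le_of_lt he.2 ht.2⟩
    rw [hfe, hfe] at this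
    exact absurd this (lt_irrefl e)
  -- f t > c on [x, c)
  have hjump : ∀ t ∈ Ico x c, c < f t := by
    intro t ht
    rcases lt_trichotomy (f t) c with h | h | h
    · exfalso
      have h4 : t < f t := hfgt t ht
      have h5 : f t ∈ Ico x c := ⟨le_trans ht.1 h4.le, h⟩
      have h6 := hfgt _ h5
      have h7 := hlt t ht
      linarith
    · exfalso
      have h7 := hlt t ht
      rw [h, hfc] at h7
      exact absurd h7 (not_lt.2 ht.2.le)
    · exact h
  -- the minimal-counterexample argument
  set S : Set ℝ := {x' | x' ∈ Icc a x ∧ ∀ t ∈ Ico x' c, c < f t ∧ f (f t) < t} with hSdef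
  have hxS : x ∈ S := ⟨⟨hx.1, le_rfl⟩, fun t ht => ⟨hjump t ht, hlt t ht⟩⟩
  have hSne : S.Nonempty := ⟨x, hxS⟩
  have hbdd : BddBelow S := ⟨a, fun y hy => hy.1.1⟩
  set xs := sInf S with hxsdef
  have hxsa : a ≤ xs := le_csInf hSne (fun y hy => hy.1.1)
  have hxsx : xs ≤ x := csInf_le hbdd hxS
  have hxsc : xs < c := lt_of_le_of_lt hxsx hxc
  have hxs_mem : xs ∈ Icc a b := ⟨hxsa, le_trans hxsx hxb⟩
  have hQ : ∀ t ∈ Ioo xs c, c < f t ∧ f (f t) < t := by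
    intro t ht
    rcases le_or_gt x t with h | h
    · exact hxS.2 t ⟨h, ht.2⟩
    · obtain ⟨x', hx'S, hx't⟩ := exists_lt_of_csInf_lt hSne ht.1
      exact hx'S.2 t ⟨hx't.le, ht.2⟩
  have hIoo_sub : Ioo xs c ⊆ Icc a b := fun t ht =>
    ⟨le_trans hxsa ht.1.le, le_trans ht.2.le hcmem.2⟩
  have hneIoo : (nhdsWithin xs (Ioo xs c)).NeBot := by
    rw [← mem_closure_iff_nhdsWithin_neBot, closure_Ioo hxsc.ne]
    exact ⟨le_rfl, hxsc.le⟩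
  have hfxs_ge : c ≤ f xs :=
    le_of_within hneIoo continuousWithinAt_const
      ((hf.continuousWithinAt hxs_mem).mono hIoo_sub) (fun t ht => (hQ t ht).1.le)
  have hffxs_le : f (f xs) ≤ xs :=
    le_of_within hneIoo ((hf2.continuousWithinAt hxs_mem).mono hIoo_sub)
      continuousWithinAt_id (fun t ht => (hQ t ht).2.le)
  have hfxs_gt : c < f xs := by
    rcases hfxs_ge.lt_or_eq with h | h
    · exact h
    · exfalso
      have : f (f xs) = c := by rw [← h, hfc]
      rw [this] at hffxs_le
      linarith
  have hffxs_lt : f (f xs) < xs := by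
    rcases hffxs_le.lt_or_eq with h | h
    · exact h
    · exfalso
      have := NP2 xs hxs_mem h
      linarith
  rcases hxsa.lt_or_eq with ha | ha
  · -- xs > a : contradict minimality
    have hxsb : xs < b := lt_of_lt_of_le hxsc hcmem.2
    have hmem_nhds : Icc a b ∈ nhds xs := Icc_mem_nhds ha hxsb
    have ht1 : Filter.Tendsto f (nhds xs) (nhds (f xs)) := by
      have h := hf.continuousWithinAt hxs_mem
      rwa [ContinuousWithinAt, nhdsWithin_eq_nhds.2 hmem_nhds] at h
    have ht2 : Filter.Tendsto (fun t => f (f t)) (nhds xs) (nhds (f (f xs))) := by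
      have h := hf2.continuousWithinAt hxs_mem
      rwa [ContinuousWithinAt, nhdsWithin_eq_nhds.2 hmem_nhds] at h
    have hev : ∀ᶠ t in nhds xs, c < f t ∧ f (f t) < t := by
      have e1 : ∀ᶠ t in nhds xs, c < f t := ht1 (Ioi_mem_nhds hfxs_gt)
      have e2 : ∀ᶠ t in nhds xs, f (f t) - t < 0 := by
        have h3 : Filter.Tendsto (fun t => f (f t) - t) (nhds xs) (nhds (f (f xs) - xs)) :=
          ht2.sub Filter.tendsto_id
        exact h3 (Iio_mem_nhds (by linarith))
      filter_upwards [e1, e2] with t h1' h2'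
      exact ⟨h1', by linarith⟩
    obtain ⟨ε, hε, hball⟩ := Metric.mem_nhds_iff.1 hev
    set x'' := max a (xs - ε / 2) with hx''def
    have hx''lt : x'' < xs := max_lt ha (by linarith)
    have hx''S : x'' ∈ S := by
      refine ⟨⟨le_max_left _ _, le_trans hx''lt.le hxsx⟩, ?_⟩
      intro t ht
      rcases lt_trichotomy t xs with h | h | h
      · have hd : dist t xs < ε := by
          rw [Real.dist_eq, abs_of_nonpos (by linarith)]
          have h5 : xs - ε / 2 ≤ x'' := le_max_right _ _
          have h6 := ht.1
          linarith
        exact hball hd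
      · rw [h]; exact ⟨hfxs_gt, hffxs_lt⟩
      · exact hQ t ⟨h, ht.2⟩
    exact absurd (csInf_le hbdd hx''S) (not_le.2 hx''lt)
  · -- xs = a : contradiction with range
    have haa : a ≤ f (f xs) := (hmaps (hmaps hxs_mem)).1
    linarith

/-- Main lemma: a least period `n ≥ 2` point forces a least period `2` point. -/
lemma main_period_two (hab : a ≤ b) (hf : ContinuousOn f (Icc a b))
    (hmaps : MapsTo f (Icc a b) (Icc a b))
    {x₀ : ℝ} (hx₀ : x₀ ∈ Icc a b) {n : ℕ} (hn : 2 ≤ n) (hlp : IsLeastPeriod f x₀ n) :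
    ∃ z ∈ Icc a b, IsLeastPeriod f z 2 := by
  classical
  by_contra hno
  push_neg at hno
  have NP2 : ∀ z ∈ Icc a b, f (f z) = z → f z = z := by
    intro z hz h2
    by_contra hzne
    refine hno z hz ⟨by norm_num, ?_, ?_⟩
    · show f^[2] z = z
      rw [show (2:ℕ) = 1 + 1 from rfl, Function.iterate_add_apply]
      simpa using h2
    · intro k hk1 hk2
      interval_cases k
      simpa using hzne
  have coher : ∀ t ∈ Icc a b, t < f t → t < f (f t) := by
    intro t ht h1
    by_contra hle
    exact coherence hab hf hmaps NP2 ht h1 (not_lt.1 hle)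
  -- orbit minimum
  obtain ⟨j₀, hj₀mem, hj₀min⟩ := Finset.exists_min_image (Finset.range n)
    (fun j => f^[j] x₀) ⟨0, Finset.mem_range.2 (by omega)⟩
  have hj₀n : j₀ < n := Finset.mem_range.1 hj₀mem
  set x := f^[j₀] x₀ with hxdef
  have hxmem : x ∈ Icc a b := hmaps.iterate j₀ hx₀
  have hper₀ : f^[n] x₀ = x₀ := hlp.2.1
  have hxper : f^[n] x = x := by
    rw [hxdef, ← Function.iterate_add_apply, add_comm, Function.iterate_add_apply, hper₀]
  have hxleast : ∀ k, 0 < k → k < n → f^[k] x ≠ x := by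
    intro k hk1 hk2 heq
    have h5 : f^[k + j₀] x₀ = f^[j₀] x₀ := by
      rw [Function.iterate_add_apply]; exact heq
    have h6 := congrArg f^[n - j₀] h5
    rw [← Function.iterate_add_apply, ← Function.iterate_add_apply] at h6
    have e1 : n - j₀ + (k + j₀) = k + n := by omega
    have e2 : n - j₀ + j₀ = n := by omega
    rw [e1, e2, hper₀, Function.iterate_add_apply, hper₀] at h6
    exact hlp.2.2 k hk1 hk2 h6
  have hminx : ∀ j, x ≤ f^[j] x := by
    intro j
    have hper : Function.IsPeriodicPt f n x := hxper
    have hper₀' : Function.IsPeriodicPt f n x₀ := hper₀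
    have h7 : f^[j] x = f^[j % n] x := (hper.iterate_mod_apply j).symm
    rw [h7, hxdef, ← Function.iterate_add_apply, ← hper₀'.iterate_mod_apply (j % n + j₀)]
    exact hj₀min _ (Finset.mem_range.2 (Nat.mod_lt _ (by omega)))
  have h1 : x < f x := by
    have h8 := hminx 1
    rw [Function.iterate_one] at h8
    rcases h8.lt_or_eq with h | h
    · exact h
    · exfalso
      exact hxleast 1 (by omega) (by omega) (by rw [Function.iterate_one]; exact h.symm)
  have hfb : f b ≤ b := (hmaps ⟨hab, le_rfl⟩).2
  -- first fixed point c above x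
  obtain ⟨c, hcmem, hceq, hcbefore⟩ := exists_first_eq (φ := fun t => t - f t) (v := 0)
    hxmem.2
    (ContinuousOn.sub continuousOn_id (hf.mono (Icc_subset_Icc hxmem.1 le_rfl)))
    (by show x - f x ≤ (0:ℝ); linarith)
    (by show (0:ℝ) ≤ b - f b; linarith)
  have hcfix : f c = c := by
    have h : c - f c = 0 := hceq
    linarith
  have hfgt : ∀ t ∈ Ico x c, t < f t := by
    intro t ht
    have h : t - f t < 0 := hcbefore t ht
    linarith
  have hxc : x < c := by
    rcases hcmem.1.lt_or_eq with h | h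
    · exact h
    · exfalso; rw [← h] at hcfix; linarith
  have hcab : c ∈ Icc a b := ⟨le_trans hxmem.1 hcmem.1, hcmem.2⟩
  -- u : last orbit point before return
  set u := f^[n - 1] x with hudef
  have humem : u ∈ Icc a b := hmaps.iterate (n - 1) hxmem
  have hu : f u = x := by
    have h9 : f^[(n-1) + 1] x = f (f^[n-1] x) := Function.iterate_succ_apply' f (n-1) x
    rw [show n - 1 + 1 = n by omega] at h9
    rw [hudef, ← h9, hxper]
  have hux : x < u := by
    rcases (hminx (n - 1)).lt_or_eq with h | h
    · exact h
    · exact absurd h.symm (hxleast (n - 1) (by omega) (by omega))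
  have huc : c < u := by
    rcases lt_trichotomy u c with h | h | h
    · exfalso
      have := hfgt u ⟨hux.le, h⟩
      rw [hu] at this
      linarith
    · exfalso; rw [h] at hu; rw [hcfix] at hu; linarith
    · exact h
  -- first point s in [c,u] with f s = x
  obtain ⟨s, hsmem, hseq, hsbefore⟩ := exists_first_eq (φ := fun t => x - f t) (v := 0)
    huc.le
    (ContinuousOn.sub continuousOn_const (hf.mono (Icc_subset_Icc hcab.1 humem.2)))
    (by show x - f c ≤ (0:ℝ); rw [hcfix]; linarith)
    (by show (0:ℝ) ≤ x - f u; rw [hu]; linarith)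
  have hfs : f s = x := by
    have h : x - f s = 0 := hseq
    linarith
  have hfgtx : ∀ t ∈ Ico c s, x < f t := by
    intro t ht
    have h : x - f t < 0 := hsbefore t ht
    linarith
  have hcs : c < s := by
    rcases hsmem.1.lt_or_eq with h | h
    · exact h
    · exfalso; rw [← h, hcfix] at hfs; linarith
  have hsmem_ab : s ∈ Icc a b := ⟨le_trans hcab.1 hsmem.1, le_trans hsmem.2 humem.2⟩
  -- first iterate k with f^[k] x ≥ s
  have hex : ∃ j, 0 < j ∧ s ≤ f^[j] x := ⟨n - 1, by omega, hsmem.2⟩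
  set k := Nat.find hex with hkdef
  have hk := Nat.find_spec hex
  have hkbefore : ∀ j, 0 < j → j < k → f^[j] x < s := by
    intro j hj0 hjk
    have hmin := Nat.find_min hex hjk
    push_neg at hmin
    exact lt_of_not_ge fun hge => absurd (hmin hj0) (not_lt.2 hge)
  set v := f^[k - 1] x with hvdef
  have hfv : f v = f^[k] x := by
    have h9 : f^[(k-1) + 1] x = f (f^[k-1] x) := Function.iterate_succ_apply' f (k-1) x
    rw [show k - 1 + 1 = k by omega] at h9
    rw [hvdef, ← h9]
  have hfvs : s ≤ f v := by rw [hfv]; exact hk.2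
  have hvx : x ≤ v := hminx (k - 1)
  have hvmem : v ∈ Icc a b := hmaps.iterate (k - 1) hxmem
  have hvs : v < s := by
    rcases Nat.lt_or_ge 1 k with h | h
    · exact hkbefore (k - 1) (by omega) (by omega)
    · have hk1 : k = 1 := by omega
      rw [hvdef, hk1]
      simpa using lt_trans hxc hcs
  have hvc : v ≠ c := by
    intro h
    rw [h, hcfix] at hfvs
    linarith
  rcases lt_or_gt_of_ne hvc with hcase1 | hcase2
  · -- CASE 1 : v < c
    have hsub_cs : Icc c s ⊆ Icc a b := Icc_subset_Icc hcab.1 hsmem_ab.2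
    obtain ⟨β, hβmem, hβeq⟩ := intermediate_value_Icc' hcs.le (hf.mono hsub_cs)
      (show v ∈ Icc (f s) (f c) from by rw [hfs, hcfix]; exact ⟨hvx, hcase1.le⟩)
    have hsub_vc : Icc v c ⊆ Icc a b := Icc_subset_Icc hvmem.1 hcab.2
    obtain ⟨α, hαmem, hαeq⟩ := intermediate_value_Icc' hcase1.le (hf.mono hsub_vc)
      (show β ∈ Icc (f c) (f v) from by rw [hcfix]; exact ⟨hβmem.1, le_trans hβmem.2 hfvs⟩)
    have hαc : α < c := by
      rcases hαmem.2.lt_or_eq with h | h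
      · exact h
      · exfalso
        rw [h, hcfix] at hαeq
        rw [← hαeq, hcfix] at hβeq
        exact hcase1.ne' hβeq
    have hαfgt : α < f α := hfgt α ⟨le_trans hvx hαmem.1, hαc⟩
    have hcoh := coher α (hsub_vc hαmem) hαfgt
    rw [hαeq, hβeq] at hcoh
    exact absurd hcoh (not_lt.2 hαmem.1)
  · -- CASE 2 : c < v
    -- d ∈ [v, s] with f d = v
    have hsub_vs : Icc v s ⊆ Icc a b := Icc_subset_Icc hvmem.1 hsmem_ab.2
    obtain ⟨d, hdmem, hdeq⟩ := intermediate_value_Icc' hvs.le (hf.mono hsub_vs)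
      (show v ∈ Icc (f s) (f v) from by rw [hfs]; exact ⟨hvx, le_trans hvs.le hfvs⟩)
    -- e ∈ [d, s] with f e = c
    have hsub_ds : Icc d s ⊆ Icc a b := Icc_subset_Icc (le_trans hvmem.1 hdmem.1) hsmem_ab.2
    obtain ⟨e, hemem, heeq⟩ := intermediate_value_Icc' hdmem.2 (hf.mono hsub_ds)
      (show c ∈ Icc (f s) (f d) from by rw [hfs, hdeq]; exact ⟨hxc.le, hcase2.le⟩)
    have hde : d ≤ e := hemem.1
    have hcd : c < d := lt_of_lt_of_le hcase2 hdmem.1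
    -- q' : first point in [c, v] with f = e
    have hsub_cv : Icc c v ⊆ Icc a b := Icc_subset_Icc hcab.1 hvmem.2
    obtain ⟨q', hq'mem, hq'eq, hq'before⟩ := exists_first_eq (v := e) hcase2.le
      (hf.mono hsub_cv)
      (by rw [hcfix]; exact le_trans hcd.le hde)
      (le_trans hemem.2 hfvs)
    -- p' : last point in [c, q'] with f = d
    have hsub_cq : Icc c q' ⊆ Icc a b := Icc_subset_Icc hcab.1 (le_trans hq'mem.2 hvmem.2)
    obtain ⟨p', hp'mem, hp'eq, hp'after⟩ := exists_last_eq' (v := d) hq'mem.1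
      (hf.mono hsub_cq)
      (by rw [hcfix]; exact hcd.le)
      (by rw [hq'eq]; exact hde)
    -- f maps [p', q'] into [d, e]
    have hK : ∀ t ∈ Icc p' q', f t ∈ Icc d e := by
      intro t ht
      constructor
      · rcases ht.1.lt_or_eq with h | h
        · exact (hp'after t ⟨h, ht.2⟩).le
        · rw [← h, hp'eq]
      · rcases ht.2.lt_or_eq with h | h
        · exact (hq'before t ⟨le_trans hp'mem.1 ht.1, h⟩).le
        · rw [h, hq'eq]
    have hffp' : f (f p') = v := by rw [hp'eq, hdeq]
    have hffq' : f (f q') = c := by rw [hq'eq, heeq]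
    -- fixed point of f ∘ f on [p', q']
    have hp'q' : p' ≤ q' := hp'mem.2
    have hsub_pq : Icc p' q' ⊆ Icc a b :=
      fun t ht => hsub_cq ⟨le_trans hp'mem.1 ht.1, ht.2⟩
    have hcont2 : ContinuousOn (fun t => f (f t) - t) (Icc p' q') :=
      ((hf.comp hf hmaps).mono hsub_pq).sub continuousOn_id
    obtain ⟨z, hzmem, hzeq⟩ := intermediate_value_Icc' hp'q' hcont2
      (show (0:ℝ) ∈ Icc (f (f q') - q') (f (f p') - p') from by
        rw [hffq', hffp']
        constructor
        · have := hq'mem.1; linarith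
        · have h10 : p' ≤ v := le_trans hp'q' hq'mem.2; linarith)
    have hz2 : f (f z) = z := by
      simp only at hzeq
      linarith
    have hzab : z ∈ Icc a b := hsub_pq hzmem
    have hfz := hK z hzmem
    have hzne : f z ≠ z := by
      intro h
      have h1' : z ≤ v := le_trans hzmem.2 hq'mem.2
      have h2' : v ≤ f z := le_trans hdmem.1 hfz.1
      rw [h] at h2'
      have hzv : z = v := le_antisymm h1' h2'
      rw [hzv] at h
      rw [h] at hfvs
      linarith
    exact hzne (NP2 z hzab hz2)

end Main

end SharkovskiiAux

/-- A least period characterizes the minimal period. -/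
lemma IsLeastPeriod.minimalPeriod_eq {f : ℝ → ℝ} {x : ℝ} {n : ℕ}
    (h : IsLeastPeriod f x n) : Function.minimalPeriod f x = n := by
  have hper : Function.IsPeriodicPt f n x := h.2.1
  have hd := hper.minimalPeriod_dvd
  have hpos : 0 < Function.minimalPeriod f x := hper.minimalPeriod_pos h.1
  have hle : Function.minimalPeriod f x ≤ n := Nat.le_of_dvd h.1 hd
  rcases hle.lt_or_eq with hlt | heq
  · exact absurd (Function.iterate_minimalPeriod (f := f) (x := x))
      (h.2.2 _ hpos hlt)
  · exact heq

/-- If a continuous self-map of a compact interval has a periodic point of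
least period `2^i * m` with `m ≥ 3` odd and `i ≥ 0`, then it has a periodic point of least
period `2^(ℓ+1)` for every `ℓ ≥ i`. -/
theorem powers_of_two_periods {a b : ℝ} (hab : a ≤ b) (f : ℝ → ℝ)
    (hf : ContinuousOn f (Set.Icc a b)) (hmaps : Set.MapsTo f (Set.Icc a b) (Set.Icc a b))
    (i m : ℕ) (hm : 3 ≤ m) (hodd : Odd m)
    (h : ∃ x ∈ Set.Icc a b, IsLeastPeriod f x (2 ^ i * m)) :
    ∀ ℓ : ℕ, i ≤ ℓ → ∃ y ∈ Set.Icc a b, IsLeastPeriod f y (2 ^ (ℓ + 1)) := by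
  obtain ⟨x₀, hx₀, hlp⟩ := h
  intro ℓ hℓ
  have hgc : ContinuousOn f^[2^ℓ] (Set.Icc a b) := SharkovskiiAux.contOn_iterate hf hmaps _
  have hgm : Set.MapsTo f^[2^ℓ] (Set.Icc a b) (Set.Icc a b) := hmaps.iterate _
  have hmp : Function.minimalPeriod f x₀ = 2 ^ i * m := hlp.minimalPeriod_eq
  -- x₀ has least period m under g = f^[2^ℓ]
  have hglp : IsLeastPeriod f^[2^ℓ] x₀ m := by
    refine ⟨by omega, ?_, ?_⟩
    · show (f^[2^ℓ])^[m] x₀ = x₀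
      rw [← Function.iterate_mul]
      have hper : Function.IsPeriodicPt f (2 ^ i * m) x₀ := hlp.2.1
      exact hper.trans_dvd (mul_dvd_mul (pow_dvd_pow 2 hℓ) dvd_rfl)
    · intro k hk1 hk2 heq
      have hper : Function.IsPeriodicPt f (2 ^ ℓ * k) x₀ := by
        show f^[2^ℓ * k] x₀ = x₀
        rw [Function.iterate_mul]
        exact heq
      have hdvd := hper.minimalPeriod_dvd
      rw [hmp] at hdvd
      have he : 2 ^ ℓ * k = 2 ^ i * (2 ^ (ℓ - i) * k) := by
        rw [← mul_assoc, ← pow_add]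
        congr 2
        omega
      rw [he] at hdvd
      have hm_dvd : m ∣ 2 ^ (ℓ - i) * k :=
        (mul_dvd_mul_iff_left (a := (2:ℕ) ^ i) (by positivity)).1 hdvd
      have hcop : Nat.Coprime m (2 ^ (ℓ - i)) :=
        Nat.Coprime.pow_right _ (hodd.coprime_two_right)
      have hmk : m ∣ k := hcop.dvd_of_dvd_mul_left hm_dvd
      have := Nat.le_of_dvd hk1 hmk
      omega
  obtain ⟨y, hy, hylp⟩ := SharkovskiiAux.main_period_two hab hgc hgm hx₀
    (show 2 ≤ m by omega) hglp
  refine ⟨y, hy, ?_⟩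
  have hy2 : (f^[2^ℓ])^[2] y = y := hylp.2.1
  have hy1 : f^[2^ℓ] y ≠ y := by
    have := hylp.2.2 1 (by omega) (by omega)
    simpa using this
  have hper2 : Function.IsPeriodicPt f (2 ^ (ℓ + 1)) y := by
    show f^[2^(ℓ+1)] y = y
    rw [pow_succ, Function.iterate_mul]
    exact hy2
  refine ⟨by positivity, hper2, ?_⟩
  intro k hk1 hk2 heq
  have hperk : Function.IsPeriodicPt f k y := heq
  have hdm1 : Function.minimalPeriod f y ∣ 2 ^ (ℓ + 1) := hper2.minimalPeriod_dvd
  have hdm2 : Function.minimalPeriod f y ∣ k := hperk.minimalPeriod_dvd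
  obtain ⟨j, hj, hdmeq⟩ := (Nat.dvd_prime_pow Nat.prime_two).1 hdm1
  by_cases hcase : j ≤ ℓ
  · have hper3 : Function.IsPeriodicPt f (2 ^ ℓ) y :=
      (Function.isPeriodicPt_minimalPeriod f y).trans_dvd
        (by rw [hdmeq]; exact pow_dvd_pow 2 hcase)
    exact hy1 hper3
  · have hj' : j = ℓ + 1 := by omega
    rw [hj'] at hdmeq
    have : 2 ^ (ℓ + 1) ≤ k := Nat.le_of_dvd hk1 (hdmeq ▸ hdm2)
    omega
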